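/- Fix integers $l,m\ge1$ and $j\ge0$. Let the matrix $C$ over $F$ have rows indexed by all tuples $(s,\boldsymbol{l},\boldsymbol{m},\boldsymbol{j})$ with $s\in\{1,\dots,n\}$ and $(\boldsymbol{l},\boldsymbol{m},\boldsymbol{j})$ admissible with $\sum_t j_t=j$, columns indexed by all admissible $(\boldsymbol{l}',\boldsymbol{m}',\boldsymbol{j}')$ with $\sum_t j'_t=j+1$, and entry in row $(s,\boldsymbol{l},\boldsymbol{m},\boldsymbol{j})$ and column $(\boldsymbol{l}',\boldsymbol{m}',\boldsymbol{j}')$ equal to $A_1$ if $(\boldsymbol{l}',\boldsymbol{m}',\boldsymbol{j}')=(\boldsymbol{l}-\boldsymbol{e}_s+\boldsymbol{e}_{s+1},\boldsymbol{m},\boldsymbol{j}+\boldsymbol{e}_{s+1})$, to $A_2$ if $=(\boldsymbol{l},\boldsymbol{m}-\boldsymbol{e}_s+\boldsymbol{e}_{s+1},\boldsymbol{j}+\boldsymbol{e}_{s+1})$, to $A_3$ if $=(\boldsymbol{l}+\boldsymbol{e}_s-\boldsymbol{e}_{s+1},\boldsymbol{m},\boldsymbol{j}+\boldsymbol{e}_s)$,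 to $A_4$ if $=(\boldsymbol{l},\boldsymbol{m}+\boldsymbol{e}_s-\boldsymbol{e}_{s+1},\boldsymbol{j}+\boldsymbol{e}_s)$, and to $0$ otherwise (indices of $n$-vectors read mod $n$; the $A_t$ computed from the row's data $s,\boldsymbol{l},\boldsymbol{m},\boldsymbol{j}$). Then $C$ has full column rank, i.e. its rank equals the number of admissible triples $(\boldsymbol{l}',\boldsymbol{m}',\boldsymbol{j}')$ with $\sum_t j'_t=j+1$. -/

import Mathlib

/- Common setup: the quantum affine algebra U_q(A^{(1)}_{2n-1}) acting on symmetric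
tensor representations V_{l,x} and their duals, coideal operators b_i, tensor products,
and the K matrix, following Kusano-Okado. -/

noncomputable section
namespace AII

open scoped TensorProduct Classical
open Finset

/-- The base field F = ℚ(q). -/
abbrev F : Type := RatFunc ℚ

/-- The quantum parameter q. -/
def qq : F := RatFunc.X

/-- Quantum integer [a] = (q^a - q^{-a})/(q - q⁻¹). -/
def qint (a : ℤ) : F := (qq ^ a - qq ^ (-a)) / (qq - qq⁻¹)

/-- Quantum factorial [a]!. -/
def qfact (a : ℕ) : F := ∏ k ∈ Finset.range a, qint (k + 1)

/-- Quantum binomial coefficient. -/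
def qbinom (j p : ℕ) : F := qfact j / (qfact p * qfact (j - p))

instance (n : ℕ) [NeZero n] : NeZero (2 * n) := ⟨by have := NeZero.ne n; omega⟩

/-- Helper instance: zero of a tensor product (works around a stuck instance search). -/
noncomputable instance {R M N : Type*} [CommSemiring R] [AddCommMonoid M] [Module R M]
    [AddCommMonoid N] [Module R N] : Zero (TensorProduct R M N) :=
  (inferInstance : AddCommMonoid (TensorProduct R M N)).toZero

/-- Index set ℤ/2n for nodes of the Dynkin diagram / entries of weight vectors. -/
abbrev Zn (n : ℕ) := ZMod (2 * n)

/-- Membership in B_l : all entries nonnegative and summing to l. -/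
def inB (n : ℕ) [NeZero n] (l : ℕ) (α : Zn n → ℤ) : Prop :=
  (∀ i, 0 ≤ α i) ∧ (∑ i, α i) = (l : ℤ)

/-- The vector space V_{l} with basis indexed by B_l. -/
abbrev V (n : ℕ) [NeZero n] (l : ℕ) := {α : Zn n → ℤ // inB n l α} →₀ F

/-- Basis vector v_α, with the convention that it is 0 if α ∉ B_l
(in particular if α has a negative entry). -/
def vB (n : ℕ) [NeZero n] (l : ℕ) (α : Zn n → ℤ) : V n l :=
  if h : inB n l α then Finsupp.single ⟨α, h⟩ 1 else 0

/-- Helper: the linear operator sending v_α ↦ c(α) • v_{sh(α)}. -/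
def opOf (n : ℕ) [NeZero n] (l : ℕ) (c : (Zn n → ℤ) → F)
    (sh : (Zn n → ℤ) → (Zn n → ℤ)) : V n l →ₗ[F] V n l :=
  Finsupp.lsum F fun a => LinearMap.toSpanSingleton F (V n l) (c a.1 • vB n l (sh a.1))

/-- The i-th standard unit vector e_i of ℤ^{2n}. -/
def eu (n : ℕ) [NeZero n] (i : Zn n) : Zn n → ℤ := fun j => if j = i then 1 else 0

/-- Chevalley generator e_i on V_{l,x}. -/
def eOp (n : ℕ) [NeZero n] (l : ℕ) (x : F) (i : Zn n) : V n l →ₗ[F] V n l :=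
  opOf n l (fun α => (if i = 0 then x else 1) * qint (α (i + 1)))
    (fun α => α + eu n i - eu n (i + 1))

/-- Chevalley generator f_i on V_{l,x}. -/
def fOp (n : ℕ) [NeZero n] (l : ℕ) (x : F) (i : Zn n) : V n l →ₗ[F] V n l :=
  opOf n l (fun α => (if i = 0 then x⁻¹ else 1) * qint (α i))
    (fun α => α - eu n i + eu n (i + 1))

/-- Cartan generator k_i on V_{l,x}. -/
def kOp (n : ℕ) [NeZero n] (l : ℕ) (i : Zn n) : V n l →ₗ[F] V n l :=
  opOf n l (fun α => qq ^ (α i - α (i + 1))) id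

/-- Inverse Cartan generator k_i⁻¹ on V_{l,x}. -/
def kInvOp (n : ℕ) [NeZero n] (l : ℕ) (i : Zn n) : V n l →ₗ[F] V n l :=
  opOf n l (fun α => qq ^ (-(α i - α (i + 1)))) id

/-- e_i on the dual representation V^*_{l,x}. -/
def eSOp (n : ℕ) [NeZero n] (l : ℕ) (x : F) (i : Zn n) : V n l →ₗ[F] V n l :=
  opOf n l (fun α => (if i = 0 then x else 1) * qint (α i))
    (fun α => α - eu n i + eu n (i + 1))

/-- f_i on the dual representation V^*_{l,x}. -/
def fSOp (n : ℕ) [NeZero n] (l : ℕ) (x : F) (i : Zn n) : V n l →ₗ[F] V n l :=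
  opOf n l (fun α => (if i = 0 then x⁻¹ else 1) * qint (α (i + 1)))
    (fun α => α + eu n i - eu n (i + 1))

/-- k_i on the dual representation V^*_{l,x}. -/
def kSOp (n : ℕ) [NeZero n] (l : ℕ) (i : Zn n) : V n l →ₗ[F] V n l :=
  opOf n l (fun α => qq ^ (-(α i - α (i + 1)))) id

/-- k_i⁻¹ on the dual representation V^*_{l,x}. -/
def kSInvOp (n : ℕ) [NeZero n] (l : ℕ) (i : Zn n) : V n l →ₗ[F] V n l :=
  opOf n l (fun α => qq ^ (α i - α (i + 1))) id

/-- The coideal generator b_i built from families of operators e, f, k⁻¹: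
b_i = f_i + γ_i (e_{i+1}e_{i-1}e_i - q⁻¹(e_{i+1}e_ie_{i-1}+e_{i-1}e_ie_{i+1})
  + q⁻²e_ie_{i-1}e_{i+1}) k_i⁻¹. -/
def bOf (n : ℕ) [NeZero n] {M : Type*} [AddCommMonoid M] [Module F M]
    (e f kinv : Zn n → (M →ₗ[F] M)) (γ : Zn n → F) (i : Zn n) : M →ₗ[F] M :=
  f i + γ i • ((e (i + 1) ∘ₗ e (i - 1) ∘ₗ e i
      + (-qq⁻¹) • (e (i + 1) ∘ₗ e i ∘ₗ e (i - 1) + e (i - 1) ∘ₗ e i ∘ₗ e (i + 1))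
      + (qq ^ (-2 : ℤ)) • (e i ∘ₗ e (i - 1) ∘ₗ e (i + 1))) ∘ₗ kinv i)

/-- b_i on V_{l,x}. -/
def bOp (n : ℕ) [NeZero n] (l : ℕ) (x : F) (γ : Zn n → F) (i : Zn n) :
    V n l →ₗ[F] V n l :=
  bOf n (fun j => eOp n l x j) (fun j => fOp n l x j) (fun j => kInvOp n l j) γ i

/-- b_i on V^*_{l,x}. -/
def bSOp (n : ℕ) [NeZero n] (l : ℕ) (x : F) (γ : Zn n → F) (i : Zn n) :
    V n l →ₗ[F] V n l :=
  bOf n (fun j => eSOp n l x j) (fun j => fSOp n l x j) (fun j => kSInvOp n l j) γ i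

/-- Coproduct action of e: E = e ⊗ 1 + k ⊗ e. -/
def coE {M N : Type*} [AddCommGroup M] [Module F M] [AddCommGroup N] [Module F N]
    (e1 k1 : M →ₗ[F] M) (e2 : N →ₗ[F] N) : M ⊗[F] N →ₗ[F] M ⊗[F] N :=
  TensorProduct.map e1 LinearMap.id + TensorProduct.map k1 e2

/-- Coproduct action of f: F = f ⊗ k⁻¹ + 1 ⊗ f. -/
def coF {M N : Type*} [AddCommGroup M] [Module F M] [AddCommGroup N] [Module F N]
    (f1 : M →ₗ[F] M) (kinv2 f2 : N →ₗ[F] N) : M ⊗[F] N →ₗ[F] M ⊗[F] N :=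
  TensorProduct.map f1 kinv2 + TensorProduct.map LinearMap.id f2

/-- Coproduct action of k^{±1}: K = k ⊗ k. -/
def coK {M N : Type*} [AddCommGroup M] [Module F M] [AddCommGroup N] [Module F N]
    (k1 : M →ₗ[F] M) (k2 : N →ₗ[F] N) : M ⊗[F] N →ₗ[F] M ⊗[F] N :=
  TensorProduct.map k1 k2

/-- A bundle of operator families (e_i, f_i, k_i, k_i⁻¹) on a module. -/
structure Ops (n : ℕ) [NeZero n] (M : Type*) [AddCommGroup M] [Module F M] where
  e : Zn n → M →ₗ[F] M
  f : Zn n → M →ₗ[F] M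
  k : Zn n → M →ₗ[F] M
  kinv : Zn n → M →ₗ[F] M

/-- The operator bundle of V_{l,x}. -/
def VOps (n : ℕ) [NeZero n] (l : ℕ) (x : F) : Ops n (V n l) :=
  ⟨fun i => eOp n l x i, fun i => fOp n l x i, fun i => kOp n l i, fun i => kInvOp n l i⟩

/-- The operator bundle of V^*_{l,x}. -/
def VSOps (n : ℕ) [NeZero n] (l : ℕ) (x : F) : Ops n (V n l) :=
  ⟨fun i => eSOp n l x i, fun i => fSOp n l x i, fun i => kSOp n l i, fun i => kSInvOp n l i⟩

/-- Coproduct operator bundle on a tensor product of two representations. -/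
def tensorOps {n : ℕ} [NeZero n] {M N : Type*} [AddCommGroup M] [Module F M]
    [AddCommGroup N] [Module F N] (A : Ops n M) (B : Ops n N) : Ops n (M ⊗[F] N) where
  e := fun i => coE (A.e i) (A.k i) (B.e i)
  f := fun i => coF (A.f i) (B.kinv i) (B.f i)
  k := fun i => coK (A.k i) (B.k i)
  kinv := fun i => coK (A.kinv i) (B.kinv i)

/-- R intertwines the bundles A and B: R ∘ a = a ∘ R for all generators. -/
def Intertwines {n : ℕ} [NeZero n] {M N : Type*} [AddCommGroup M] [Module F M]
    [AddCommGroup N] [Module F N] (A : Ops n M) (B : Ops n N) (R : M →ₗ[F] N) : Prop :=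
  ∀ i : Zn n, R ∘ₗ A.e i = B.e i ∘ₗ R ∧ R ∘ₗ A.f i = B.f i ∘ₗ R ∧
    R ∘ₗ A.k i = B.k i ∘ₗ R ∧ R ∘ₗ A.kinv i = B.kinv i ∘ₗ R

/-- E_i on V_{l,x} ⊗ V_{m,y}. -/
def tE (n : ℕ) [NeZero n] (l m : ℕ) (x y : F) (i : Zn n) :
    V n l ⊗[F] V n m →ₗ[F] V n l ⊗[F] V n m := (tensorOps (VOps n l x) (VOps n m y)).e i

/-- F_i on V_{l,x} ⊗ V_{m,y}. -/
def tF (n : ℕ) [NeZero n] (l m : ℕ) (x y : F) (i : Zn n) :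
    V n l ⊗[F] V n m →ₗ[F] V n l ⊗[F] V n m := (tensorOps (VOps n l x) (VOps n m y)).f i

/-- K_i on V_{l,x} ⊗ V_{m,y}. -/
def tK (n : ℕ) [NeZero n] (l m : ℕ) (x y : F) (i : Zn n) :
    V n l ⊗[F] V n m →ₗ[F] V n l ⊗[F] V n m := (tensorOps (VOps n l x) (VOps n m y)).k i

/-- K_i⁻¹ on V_{l,x} ⊗ V_{m,y}. -/
def tKInv (n : ℕ) [NeZero n] (l m : ℕ) (x y : F) (i : Zn n) :
    V n l ⊗[F] V n m →ₗ[F] V n l ⊗[F] V n m := (tensorOps (VOps n l x) (VOps n m y)).kinv i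

/-- B_i on V_{l,x} ⊗ V_{m,y}. -/
def tB (n : ℕ) [NeZero n] (l m : ℕ) (x y : F) (γ : Zn n → F) (i : Zn n) :
    V n l ⊗[F] V n m →ₗ[F] V n l ⊗[F] V n m :=
  bOf n (fun j => tE n l m x y j) (fun j => tF n l m x y j) (fun j => tKInv n l m x y j) γ i

/-- The entry permutation σ^{(ε)}: switches α_{i-1} and α_i whenever i ≡ ε (mod 2),
i.e. pairs {ε+2k-1, ε+2k}. -/
def sigmaPerm (n : ℕ) [NeZero n] (ε : ℕ) (j : Zn n) : Zn n :=
  if (j - (ε : Zn n)).val % 2 = 1 then j + 1 else j - 1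

/-- Action of σ^{(ε)} on entry vectors. -/
def sigmaAct (n : ℕ) [NeZero n] (ε : ℕ) (α : Zn n → ℤ) : Zn n → ℤ :=
  fun j => α (sigmaPerm n ε j)

/-- The coefficient of the K matrix:
x^{ε(α_1-α_{2n})} ∏_{j=ε,ε+2,…,ε+2n-2} (-q⁻¹γ_j)^{-∑_{i=ε+1}^{j} α_i}. -/
def Kcoef (n : ℕ) [NeZero n] (x : F) (γ : Zn n → F) (ε : ℕ) (α : Zn n → ℤ) : F :=
  x ^ ((ε : ℤ) * (α 1 - α 0)) *
    ∏ k ∈ Finset.range n,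
      (-qq⁻¹ * γ ((ε : Zn n) + 2 * (k : Zn n))) ^
        (-(∑ r ∈ Finset.range (2 * k), α ((ε : Zn n) + 1 + (r : Zn n))))

/-- The explicit K matrix K(x) : V_{l,x} → V^*_{l,x⁻¹},
v_α ↦ Kcoef(α) v^*_{σ^{(ε)}(α)}. -/
def Kmap (n : ℕ) [NeZero n] (l : ℕ) (x : F) (γ : Zn n → F) (ε : ℕ) :
    V n l →ₗ[F] V n l :=
  opOf n l (fun α => Kcoef n x γ ε α) (sigmaAct n ε)

/-- The simplified K matrix (for γ_j = -q): v_α ↦ x^{ε(α_1-α_{2n})} v^*_{σ^{(ε)}(α)}. -/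
def KmapS (n : ℕ) [NeZero n] (l : ℕ) (x : F) (ε : ℕ) : V n l →ₗ[F] V n l :=
  opOf n l (fun α => x ^ ((ε : ℤ) * (α 1 - α 0))) (sigmaAct n ε)

/-- Cartan matrix of A^{(1)}_{2n-1}: a_{ij} = 2δ_{ij} - δ_{i,j+1} - δ_{i,j-1}. -/
def cartan (n : ℕ) [NeZero n] (i j : Zn n) : ℤ :=
  (if i = j then 2 else 0) - (if i = j + 1 then 1 else 0) - (if i = j - 1 then 1 else 0)

/- ### sl2 representations U_l -/

/-- The (l+1)-dimensional irreducible U_q(sl_2)-module U_l. -/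
abbrev UL (l : ℕ) := {p : ℕ × ℕ // p.1 + p.2 = l} →₀ F

/-- Basis vector u_{(a,b)} of U_l, zero when out of range. -/
def uB (l : ℕ) (a b : ℤ) : UL l :=
  if h : 0 ≤ a ∧ 0 ≤ b ∧ a.toNat + b.toNat = l then Finsupp.single ⟨(a.toNat, b.toNat), h.2.2⟩ 1
  else 0

/-- Helper for sl2 operators. -/
def slOf (l : ℕ) (c : ℕ × ℕ → F) (sh : ℕ × ℕ → ℤ × ℤ) : UL l →ₗ[F] UL l :=
  Finsupp.lsum F fun a => LinearMap.toSpanSingleton F (UL l) (c a.1 • uB l (sh a.1).1 (sh a.1).2)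

/-- e on U_l : u_{(a,b)} ↦ [b]u_{(a+1,b-1)}. -/
def esl (l : ℕ) : UL l →ₗ[F] UL l :=
  slOf l (fun p => qint p.2) (fun p => ((p.1 : ℤ) + 1, (p.2 : ℤ) - 1))

/-- f on U_l : u_{(a,b)} ↦ [a]u_{(a-1,b+1)}. -/
def fsl (l : ℕ) : UL l →ₗ[F] UL l :=
  slOf l (fun p => qint p.1) (fun p => ((p.1 : ℤ) - 1, (p.2 : ℤ) + 1))

/-- k on U_l. -/
def ksl (l : ℕ) : UL l →ₗ[F] UL l :=
  slOf l (fun p => qq ^ ((p.1 : ℤ) - (p.2 : ℤ))) (fun p => ((p.1 : ℤ), (p.2 : ℤ)))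

/-- k⁻¹ on U_l. -/
def kslInv (l : ℕ) : UL l →ₗ[F] UL l :=
  slOf l (fun p => qq ^ (-((p.1 : ℤ) - (p.2 : ℤ)))) (fun p => ((p.1 : ℤ), (p.2 : ℤ)))

/-- The highest weight vector w^{(l,m)}_j of U_{l+m-2j} ⊂ U_l ⊗ U_m. -/
def wsl (l m j : ℕ) : UL l ⊗[F] UL m :=
  ∑ p ∈ Finset.range (j + 1),
    ((-1 : F) ^ p * qq ^ ((p : ℤ) * ((l : ℤ) - p + 1)) * qbinom j p) •
      (uB l ((l : ℤ) - p) p ⊗ₜ[F] uB m ((m : ℤ) - j + p) ((j : ℤ) - p))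

/- ### The U(I_•)-highest weight vectors of V_l ⊗ V_m -/

open Fin.NatCast in
/-- The index t ∈ {1,…,n} (0-based, in Fin n) of the sl2-pair containing
the entry position i : the pairs are {2t-1, 2t}. -/
def pairIdx (n : ℕ) [NeZero n] (i : Zn n) : Fin n :=
  if i.val % 2 = 1 then ((i.val / 2 : ℕ) : Fin n) else (((i.val + 2 * n - 2) / 2 : ℕ) : Fin n)

/-- The entry vector α with α_{2t-1} = l_t - p_t, α_{2t} = p_t. -/
def alphaOf (n : ℕ) [NeZero n] (bl : Fin n → ℤ) (p : Fin n → ℕ) : Zn n → ℤ :=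
  fun i => if i.val % 2 = 1 then bl (pairIdx n i) - p (pairIdx n i) else (p (pairIdx n i) : ℤ)

/-- The entry vector β with β_{2t-1} = m_t - j_t + p_t, β_{2t} = j_t - p_t. -/
def betaOf (n : ℕ) [NeZero n] (bm bj : Fin n → ℤ) (p : Fin n → ℕ) : Zn n → ℤ :=
  fun i => if i.val % 2 = 1 then bm (pairIdx n i) - bj (pairIdx n i) + p (pairIdx n i)
    else bj (pairIdx n i) - p (pairIdx n i)

/-- Admissibility of a triple (𝒍, 𝒎, 𝒋). -/
def adm (n : ℕ) [NeZero n] (l m : ℕ) (bl bm bj : Fin n → ℤ) : Prop :=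
  (∀ t, 0 ≤ bl t) ∧ (∀ t, 0 ≤ bm t) ∧ (∑ t, bl t) = (l : ℤ) ∧ (∑ t, bm t) = (m : ℤ) ∧
    (∀ t, 0 ≤ bj t ∧ bj t ≤ min (bl t) (bm t))

/-- The U(I_•)-highest weight vector 𝒘^{(𝒍,𝒎)}_𝒋 ∈ V_{l,1} ⊗ V_{m,1},
zero when the triple is not admissible. -/
def wbig (n : ℕ) [NeZero n] (l m : ℕ) (bl bm bj : Fin n → ℤ) : V n l ⊗[F] V n m :=
  if adm n l m bl bm bj then
    ∑ p ∈ Fintype.piFinset (fun t => Finset.range ((bj t).toNat + 1)),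
      (∏ t, ((-1 : F) ^ (p t) * qq ^ ((p t : ℤ) * (bl t - p t + 1)) * qbinom (bj t).toNat (p t))) •
        (vB n l (alphaOf n bl p) ⊗ₜ[F] vB n m (betaOf n bm bj p))
  else (0 : V n l ⊗[F] V n m)

/-- The s-th standard unit vector of ℤ^n. -/
def eun (n : ℕ) [NeZero n] (s : Fin n) : Fin n → ℤ := fun t => if t = s then 1 else 0

/-- The Dynkin index i = 2s ∈ ℤ/2n attached to s ∈ {1,…,n} (s 0-based in Fin n). -/
def iZ (n : ℕ) [NeZero n] (s : Fin n) : Zn n := ((2 * s.val + 2 : ℕ) : Zn n)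

/- ### Coefficients from Propositions 4.3–4.5 -/


def cD1 (n : ℕ) [NeZero n] (bl bm bj : Fin n → ℤ) (s : Fin n) : F := -(qq ^ (-(bj s) - bj (s+1) + bl s + bm (s+1) + 1) * qint (bj s))
def cD2 (n : ℕ) [NeZero n] (bl bm bj : Fin n → ℤ) (s : Fin n) : F := qint (bj s)
def cD3 (n : ℕ) [NeZero n] (bl bm bj : Fin n → ℤ) (s : Fin n) : F := -(qq ^ (-(bj s) - bj (s+1) + bl (s+1) + bm (s+1) + 1) * qint (bj (s+1)))
def cD4 (n : ℕ) [NeZero n] (bl bm bj : Fin n → ℤ) (s : Fin n) : F := qq ^ (-2 * bj s - 2 * bj (s+1) + bl s + bl (s+1) + 2 * bm (s+1) + 2) * qint (bj (s+1))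

def cB1 (n : ℕ) [NeZero n] (bl bm bj : Fin n → ℤ) (s : Fin n) : F := qq ^ (bj s - bj (s+1) - bm s + bm (s+1)) * qint (bl s - bj s)
def cB2 (n : ℕ) [NeZero n] (bl bm bj : Fin n → ℤ) (s : Fin n) : F := qint (bm s - bj s)
def cB3 (n : ℕ) [NeZero n] (bl bm bj : Fin n → ℤ) (s : Fin n) : F := -(qq ^ (bj s - bj (s+1) - bl s - bm s + bl (s+1) + bm (s+1)) * qint (bm s - bj s))
def cB4 (n : ℕ) [NeZero n] (bl bm bj : Fin n → ℤ) (s : Fin n) : F := -(qq ^ (2 * bj s - 2 * bj (s+1) - bl s - 2 * bm s + bl (s+1) + 2 * bm (s+1)) * qint (bl s - bj s))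

def cC1 (n : ℕ) [NeZero n] (bl bm bj : Fin n → ℤ) (s : Fin n) : F := -(qq ^ (-(bj s) + bj (s+1) + bl s - bl (s+1)) * qint (bm (s+1) - bj (s+1)))
def cC2 (n : ℕ) [NeZero n] (bl bm bj : Fin n → ℤ) (s : Fin n) : F := -qint (bl (s+1) - bj (s+1))
def cC3 (n : ℕ) [NeZero n] (bl bm bj : Fin n → ℤ) (s : Fin n) : F := qq ^ (-(bj s) + bj (s+1)) * qint (bl (s+1) - bj (s+1))
def cC4 (n : ℕ) [NeZero n] (bl bm bj : Fin n → ℤ) (s : Fin n) : F := qq ^ (-2 * bj s + 2 * bj (s+1) + bl s - bl (s+1)) * qint (bm (s+1) - bj (s+1))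

/-- The denominator N = [l_s+m_s-2j_s+1][l_{s+1}+m_{s+1}-2j_{s+1}+1]. -/
def cN (n : ℕ) [NeZero n] (bl bm bj : Fin n → ℤ) (s : Fin n) : F := qint (bl s + bm s - 2 * bj s + 1) * qint (bl (s+1) + bm (s+1) - 2 * bj (s+1) + 1)


/-- A_1 as a function of the six integers l_s, l_{s+1}, m_s, m_{s+1}, j_s, j_{s+1}. -/
def sA1 (ls ls1 ms ms1 js js1 : ℤ) : F :=
  qq ^ (js + js1 - ls1 - ms - 1) * qint (ls - js) * qint (ms1 - js1) * qint (ls + ms - js + 1)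
    / (qint (ls + ms - 2 * js + 1) * qint (ls1 + ms1 - 2 * js1 + 1))

def sA2 (ls ls1 ms ms1 js js1 : ℤ) : F :=
  -(qint (ls1 - js1) * qint (ms - js) * qint (ls + ms - js + 1))
    / (qint (ls + ms - 2 * js + 1) * qint (ls1 + ms1 - 2 * js1 + 1))

def sA3 (ls ls1 ms ms1 js js1 : ℤ) : F :=
  qq ^ (js + js1 - ls - ms - 1) * qint (ls1 - js1) * qint (ms - js) * qint (ls1 + ms1 - js1 + 1)
    / (qint (ls + ms - 2 * js + 1) * qint (ls1 + ms1 - 2 * js1 + 1))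

def sA4 (ls ls1 ms ms1 js js1 : ℤ) : F :=
  -(qq ^ (2 * js + 2 * js1 - ls - ls1 - 2 * ms - 2) * qint (ls - js) * qint (ms1 - js1)
      * qint (ls1 + ms1 - js1 + 1))
    / (qint (ls + ms - 2 * js + 1) * qint (ls1 + ms1 - 2 * js1 + 1))


def cA1 (n : ℕ) [NeZero n] (bl bm bj : Fin n → ℤ) (s : Fin n) : F := sA1 (bl s) (bl (s+1)) (bm s) (bm (s+1)) (bj s) (bj (s+1))
def cA2 (n : ℕ) [NeZero n] (bl bm bj : Fin n → ℤ) (s : Fin n) : F := sA2 (bl s) (bl (s+1)) (bm s) (bm (s+1)) (bj s) (bj (s+1))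
def cA3 (n : ℕ) [NeZero n] (bl bm bj : Fin n → ℤ) (s : Fin n) : F := sA3 (bl s) (bl (s+1)) (bm s) (bm (s+1)) (bj s) (bj (s+1))
def cA4 (n : ℕ) [NeZero n] (bl bm bj : Fin n → ℤ) (s : Fin n) : F := sA4 (bl s) (bl (s+1)) (bm s) (bm (s+1)) (bj s) (bj (s+1))

def cBB1 (n : ℕ) [NeZero n] (bl bm bj : Fin n → ℤ) (s : Fin n) : F := cB1 n bl bm bj s * qint (bl s + bm s - bj s + 1)
  * qint (bl (s+1) + bm (s+1) - 2 * bj (s+1)) / cN n bl bm bj s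
def cBB2 (n : ℕ) [NeZero n] (bl bm bj : Fin n → ℤ) (s : Fin n) : F := cB2 n bl bm bj s * qint (bl s + bm s - bj s + 1)
  * qint (bl (s+1) + bm (s+1) - 2 * bj (s+1)) / cN n bl bm bj s
def cBB3 (n : ℕ) [NeZero n] (bl bm bj : Fin n → ℤ) (s : Fin n) : F := cB3 n bl bm bj s * qint (bj (s+1))
  * qint (bl (s+1) + bm (s+1) - 2 * bj (s+1)) / cN n bl bm bj s
def cBB4 (n : ℕ) [NeZero n] (bl bm bj : Fin n → ℤ) (s : Fin n) : F := cB4 n bl bm bj s * qint (bj (s+1))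
  * qint (bl (s+1) + bm (s+1) - 2 * bj (s+1)) / cN n bl bm bj s

def cCC1 (n : ℕ) [NeZero n] (bl bm bj : Fin n → ℤ) (s : Fin n) : F := cC1 n bl bm bj s * qint (bj s) * qint (bl s + bm s - 2 * bj s) / cN n bl bm bj s
def cCC2 (n : ℕ) [NeZero n] (bl bm bj : Fin n → ℤ) (s : Fin n) : F := cC2 n bl bm bj s * qint (bj s) * qint (bl s + bm s - 2 * bj s) / cN n bl bm bj s
def cCC3 (n : ℕ) [NeZero n] (bl bm bj : Fin n → ℤ) (s : Fin n) : F := cC3 n bl bm bj s * qint (bl s + bm s - 2 * bj s)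
  * qint (bl (s+1) + bm (s+1) - bj (s+1) + 1) / cN n bl bm bj s
def cCC4 (n : ℕ) [NeZero n] (bl bm bj : Fin n → ℤ) (s : Fin n) : F := cC4 n bl bm bj s * qint (bl s + bm s - 2 * bj s)
  * qint (bl (s+1) + bm (s+1) - bj (s+1) + 1) / cN n bl bm bj s

def cDD1 (n : ℕ) [NeZero n] (bl bm bj : Fin n → ℤ) (s : Fin n) : F := cD1 n bl bm bj s * qint (bl s + bm s - 2 * bj s)
  * qint (bl (s+1) + bm (s+1) - 2 * bj (s+1)) / cN n bl bm bj s
def cDD2 (n : ℕ) [NeZero n] (bl bm bj : Fin n → ℤ) (s : Fin n) : F := cD2 n bl bm bj s * qint (bl s + bm s - 2 * bj s)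
  * qint (bl (s+1) + bm (s+1) - 2 * bj (s+1)) / cN n bl bm bj s
def cDD3 (n : ℕ) [NeZero n] (bl bm bj : Fin n → ℤ) (s : Fin n) : F := cD3 n bl bm bj s * qint (bl s + bm s - 2 * bj s)
  * qint (bl (s+1) + bm (s+1) - 2 * bj (s+1)) / cN n bl bm bj s
def cDD4 (n : ℕ) [NeZero n] (bl bm bj : Fin n → ℤ) (s : Fin n) : F := cD4 n bl bm bj s * qint (bl s + bm s - 2 * bj s)
  * qint (bl (s+1) + bm (s+1) - 2 * bj (s+1)) / cN n bl bm bj s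


/-- The entry of the matrix C of Proposition 4.8, for row data (s, 𝒍, 𝒎, 𝒋)
and column data (𝒍', 𝒎', 𝒋'). -/
def Centry (n : ℕ) [NeZero n] (s : Fin n) (bl bm bj bl' bm' bj' : Fin n → ℤ) : F :=
  if bl' = bl - eun n s + eun n (s + 1) ∧ bm' = bm ∧ bj' = bj + eun n (s + 1) then
    cA1 n bl bm bj s
  else if bl' = bl ∧ bm' = bm - eun n s + eun n (s + 1) ∧ bj' = bj + eun n (s + 1) then
    cA2 n bl bm bj s
  else if bl' = bl + eun n s - eun n (s + 1) ∧ bm' = bm ∧ bj' = bj + eun n s then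
    cA3 n bl bm bj s
  else if bl' = bl ∧ bm' = bm + eun n s - eun n (s + 1) ∧ bj' = bj + eun n s then
    cA4 n bl bm bj s
  else 0

/-- f ∈ ℚ(q) is regular at q = 0 and vanishes there (i.e. f ∈ qA). -/
def vanishesAt0 (f : F) : Prop :=
  ∃ a b : Polynomial ℚ, Polynomial.eval 0 b ≠ 0 ∧ Polynomial.eval 0 a = 0 ∧
    f = algebraMap (Polynomial ℚ) F a / algebraMap (Polynomial ℚ) F b


/- ### Auxiliary lemmas for Proposition 4.8 -/

section Prop48Aux

open RatFunc

lemma qq_ne : (qq : F) ≠ 0 := RatFunc.X_ne_zero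

lemma dg_qq : (qq : F).intDegree = 1 := intDegree_X

lemma dg_pow (k : ℕ) : ((qq : F) ^ k).intDegree = k := by
  induction k with
  | zero => simp
  | succ k ih =>
    rw [pow_succ, intDegree_mul (pow_ne_zero _ qq_ne) qq_ne, ih, dg_qq]
    push_cast; ring

lemma dg_inv (x : F) (hx : x ≠ 0) : x⁻¹.intDegree = -x.intDegree := by
  have h : x * x⁻¹ = 1 := mul_inv_cancel₀ hx
  have := intDegree_mul hx (inv_ne_zero hx)
  rw [h, intDegree_one] at this
  omega

lemma dg_zpow (a : ℤ) : ((qq : F) ^ a).intDegree = a := by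
  rcases a.natAbs_eq with h | h
  · rw [h, zpow_natCast, dg_pow]
  · rw [h, zpow_neg, zpow_natCast, dg_inv _ (pow_ne_zero _ qq_ne), dg_pow]

lemma dg_add_left {f g : F} (hf : f ≠ 0) (hg : g ≠ 0)
    (h : g.intDegree < f.intDegree) : f + g ≠ 0 ∧ (f + g).intDegree = f.intDegree := by
  have hfg : f + g ≠ 0 := by
    intro h0
    have : g = -f := by linear_combination h0
    rw [this, intDegree_neg] at h; omega
  refine ⟨hfg, le_antisymm ?_ ?_⟩
  · have := intDegree_add_le hg hfg
    omega
  · have hsplit : f = (f + g) + (-g) := by ring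
    have h2 := intDegree_add_le (x := f + g) (y := -g) (by simpa using hg)
      (by rw [← hsplit]; exact hf)
    rw [← hsplit, intDegree_neg] at h2
    omega

lemma qint_zero' : qint 0 = 0 := by simp [qint]

lemma qint_spec {a : ℤ} (ha : 1 ≤ a) : qint a ≠ 0 ∧ (qint a).intDegree = a - 1 := by
  have hnum : (qq : F) ^ a - qq ^ (-a) ≠ 0 ∧ ((qq : F) ^ a - qq ^ (-a)).intDegree = a := by
    have := dg_add_left (f := (qq : F) ^ a) (g := -qq ^ (-a))
      (zpow_ne_zero _ qq_ne) (by simpa using zpow_ne_zero (-a) qq_ne)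
      (by rw [intDegree_neg, dg_zpow, dg_zpow]; omega)
    constructor
    · intro h0; exact this.1 (by linear_combination h0)
    · have h2 := this.2
      rw [dg_zpow] at h2
      calc ((qq : F) ^ a - qq ^ (-a)).intDegree
          = ((qq : F) ^ a + -qq ^ (-a)).intDegree := by ring_nf
        _ = a := h2
  have hden : (qq : F) - qq⁻¹ ≠ 0 ∧ ((qq : F) - qq⁻¹).intDegree = 1 := by
    have := dg_add_left (f := (qq : F)) (g := -qq⁻¹) qq_ne
      (by simpa using inv_ne_zero qq_ne)
      (by rw [intDegree_neg, dg_inv _ qq_ne, dg_qq]; omega)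
    constructor
    · intro h0; exact this.1 (by linear_combination h0)
    · have h2 := this.2
      rw [dg_qq] at h2
      calc ((qq : F) - qq⁻¹).intDegree = ((qq : F) + -qq⁻¹).intDegree := by ring_nf
        _ = 1 := h2
  constructor
  · exact div_ne_zero hnum.1 hden.1
  · rw [qint, div_eq_mul_inv, intDegree_mul hnum.1 (inv_ne_zero hden.1),
      dg_inv _ hden.1, hnum.2, hden.2]
    omega

lemma entry_spec (e x y z w1 w2 : ℤ) (hx : 1 ≤ x) (hy : 1 ≤ y) (hz : 1 ≤ z)
    (h1 : 1 ≤ w1) (h2 : 1 ≤ w2) :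
    (qq ^ e * qint x * qint y * qint z / (qint w1 * qint w2)) ≠ 0 ∧
    (qq ^ e * qint x * qint y * qint z / (qint w1 * qint w2)).intDegree
      = e + x + y + z - w1 - w2 - 1 := by
  obtain ⟨hx0, hxd⟩ := qint_spec hx
  obtain ⟨hy0, hyd⟩ := qint_spec hy
  obtain ⟨hz0, hzd⟩ := qint_spec hz
  obtain ⟨h10, h1d⟩ := qint_spec h1
  obtain ⟨h20, h2d⟩ := qint_spec h2
  have hq : (qq : F) ^ e ≠ 0 := zpow_ne_zero _ qq_ne
  have hnum : (qq : F) ^ e * qint x * qint y * qint z ≠ 0 :=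
    mul_ne_zero (mul_ne_zero (mul_ne_zero hq hx0) hy0) hz0
  have hden : qint w1 * qint w2 ≠ 0 := mul_ne_zero h10 h20
  refine ⟨div_ne_zero hnum hden, ?_⟩
  rw [div_eq_mul_inv, intDegree_mul hnum (inv_ne_zero hden), dg_inv _ hden,
    intDegree_mul (mul_ne_zero (mul_ne_zero hq hx0) hy0) hz0,
    intDegree_mul (mul_ne_zero hq hx0) hy0, intDegree_mul hq hx0,
    intDegree_mul h10 h20, dg_zpow, hxd, hyd, hzd, h1d, h2d]
  ring

lemma sA2_shape (ls ls1 ms ms1 js js1 : ℤ) :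
    sA2 ls ls1 ms ms1 js js1 =
      -(qq ^ (0 : ℤ) * qint (ls1 - js1) * qint (ms - js) * qint (ls + ms - js + 1)
        / (qint (ls + ms - 2 * js + 1) * qint (ls1 + ms1 - 2 * js1 + 1))) := by
  rw [sA2, zpow_zero]; ring

lemma sA4_shape (ls ls1 ms ms1 js js1 : ℤ) :
    sA4 ls ls1 ms ms1 js js1 =
      -(qq ^ (2 * js + 2 * js1 - ls - ls1 - 2 * ms - 2) * qint (ls - js) * qint (ms1 - js1)
        * qint (ls1 + ms1 - js1 + 1)
        / (qint (ls + ms - 2 * js + 1) * qint (ls1 + ms1 - 2 * js1 + 1))) := by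
  rw [sA4]; ring

lemma sA1_zero {ls ls1 ms ms1 js js1 : ℤ} (h : ls - js = 0 ∨ ms1 - js1 = 0) :
    sA1 ls ls1 ms ms1 js js1 = 0 := by
  rcases h with h | h <;> rw [sA1, h, qint_zero'] <;> simp

lemma sA4_zero {ls ls1 ms ms1 js js1 : ℤ} (h : ls - js = 0 ∨ ms1 - js1 = 0) :
    sA4 ls ls1 ms ms1 js js1 = 0 := by
  rcases h with h | h <;> rw [sA4, h, qint_zero'] <;> simp

/-- The local potential `ψ(a,b,c) = 2c(a+b) - 2c² - ab`. -/
def psiZ (a b c : ℤ) : ℤ := 2 * c * (a + b) - 2 * c ^ 2 - a * b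

lemma sum_offdiag {n : ℕ} [NeZero n] (f g : Fin n → ℤ) {s t : Fin n} (hst : s ≠ t)
    (h : ∀ r, r ≠ s → r ≠ t → f r = g r) :
    ∑ r, f r = (∑ r, g r) + (f s - g s) + (f t - g t) := by
  have key : ∑ r, (f r - g r) = ∑ r ∈ ({s, t} : Finset (Fin n)), (f r - g r) := by
    refine (Finset.sum_subset (Finset.subset_univ _) ?_).symm
    intro r _ hr
    simp only [Finset.mem_insert, Finset.mem_singleton, not_or] at hr
    rw [h r hr.1 hr.2, sub_self]
  rw [Finset.sum_sub_distrib, Finset.sum_pair hst] at key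
  omega

lemma sum_dominant {ι : Type*} (S : Finset ι) (f : ι → F) (c : ι) (hc : c ∈ S)
    (hfc : f c ≠ 0)
    (hoth : ∀ c' ∈ S, c' ≠ c → f c' = 0 ∨ (f c' ≠ 0 ∧ (f c').intDegree < (f c).intDegree)) :
    ∑ x ∈ S, f x ≠ 0 := by
  classical
  rw [← Finset.add_sum_erase S f hc]
  set D := (f c).intDegree with hD
  have hrest : (∑ x ∈ S.erase c, f x) = 0 ∨
      ((∑ x ∈ S.erase c, f x) ≠ 0 ∧ (∑ x ∈ S.erase c, f x).intDegree < D) := by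
    refine Finset.sum_induction f (fun x => x = 0 ∨ (x ≠ 0 ∧ x.intDegree < D)) ?_ (Or.inl rfl) ?_
    · rintro a b (rfl | ⟨ha, hda⟩) hb
      · simpa using hb
      rcases hb with rfl | ⟨hb, hdb⟩
      · simpa using Or.inr ⟨ha, hda⟩
      by_cases hab : a + b = 0
      · exact Or.inl hab
      · refine Or.inr ⟨hab, ?_⟩
        have := intDegree_add_le hb hab
        omega
    · intro x hx
      have hx' := Finset.mem_of_mem_erase hx
      exact hoth x hx' (Finset.ne_of_mem_erase hx)
  rcases hrest with h0 | ⟨hne, hlt⟩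
  · rw [h0, add_zero]; exact hfc
  · intro hsum
    have : (∑ x ∈ S.erase c, f x) = -(f c) := by linear_combination hsum
    rw [this, intDegree_neg] at hlt
    omega

end Prop48Aux

set_option synthInstance.maxHeartbeats 1000000
set_option maxHeartbeats 3200000

open RatFunc in
/-- Proposition 4.8: the matrix C whose rows are indexed by
(s, 𝒍, 𝒎, 𝒋) with |𝒋| = j and columns by admissible (𝒍', 𝒎', 𝒋') with |𝒋'| = j+1,
with entries the coefficients A_t, has full column rank, i.e. its columns are
linearly independent. -/
theorem statement17 (n : ℕ) [NeZero n] (hn : 2 ≤ n) (l m : ℕ) (hl : 1 ≤ l) (hm : 1 ≤ m)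
    (j : ℕ) :
    LinearIndependent F
      (fun col : {d : (Fin n → ℤ) × (Fin n → ℤ) × (Fin n → ℤ) //
          adm n l m d.1 d.2.1 d.2.2 ∧ (∑ t, d.2.2 t) = (j : ℤ) + 1} =>
        fun row : Fin n × {d : (Fin n → ℤ) × (Fin n → ℤ) × (Fin n → ℤ) //
            adm n l m d.1 d.2.1 d.2.2 ∧ (∑ t, d.2.2 t) = (j : ℤ)} =>
          Centry n row.1 row.2.1.1 row.2.1.2.1 row.2.1.2.2 col.1.1 col.1.2.1 col.1.2.2) := by
  classical
  rw [linearIndependent_iff]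
  intro ll hll
  by_contra hne
  have hsupp : ll.support.Nonempty := Finsupp.support_nonempty_iff.mpr hne
  set pot : {d : (Fin n → ℤ) × (Fin n → ℤ) × (Fin n → ℤ) //
      adm n l m d.1 d.2.1 d.2.2 ∧ (∑ t, d.2.2 t) = (j : ℤ) + 1} → ℤ :=
    fun c => ∑ r, psiZ (c.1.1 r) (c.1.2.1 r) (c.1.2.2 r) with hpotdef
  obtain ⟨cm, hcm, hmax⟩ := ll.support.exists_max_image
    (fun c => (ll c).intDegree - pot c) hsupp
  obtain ⟨⟨L, M, J⟩, hpair⟩ := cm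
  have hadm : adm n l m L M J := hpair.1
  have hsum : (∑ r, J r) = (j : ℤ) + 1 := hpair.2
  obtain ⟨hL0, hM0, hLsum, hMsum, hJ⟩ := hadm
  have hexists : ∃ t, 0 < J t := by
    by_contra hno
    push_neg at hno
    have hz : ∑ r, J r = 0 := Finset.sum_eq_zero fun r _ => le_antisymm (hno r) (hJ r).1
    rw [hz] at hsum; omega
  obtain ⟨t, hJtpos⟩ := hexists
  set s : Fin n := t - 1 with hsdef
  have hs1 : s + 1 = t := sub_add_cancel t 1
  have hone : (1 : Fin n) ≠ 0 := by
    intro h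
    have hv := congrArg Fin.val h
    rw [Fin.val_one' n, Fin.val_zero, Nat.mod_eq_of_lt (by omega)] at hv
    omega
  have hst : s ≠ t := by
    intro h
    rw [h] at hs1
    exact hone (by linear_combination (norm := abel) hs1)
  have hts : t ≠ s := Ne.symm hst
  have hJs := hJ s
  have hJt := hJ t
  rw [le_min_iff] at hJs hJt
  set bmr : Fin n → ℤ := M + eun n s - eun n t with hbmr
  set bjr : Fin n → ℤ := J - eun n t with hbjr
  have hbmrs : bmr s = M s + 1 := by simp [hbmr, eun, hst]
  have hbmrt : bmr t = M t - 1 := by simp [hbmr, eun, hts]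
  have hbmro : ∀ r, r ≠ s → r ≠ t → bmr r = M r := by
    intro r h1 h2; simp [hbmr, eun, h1, h2]
  have hbjrs : bjr s = J s := by simp [hbjr, eun, hst]
  have hbjrt : bjr t = J t - 1 := by simp [hbjr, eun]
  have hbjro : ∀ r, r ≠ t → bjr r = J r := by
    intro r h2; simp [hbjr, eun, h2]
  have heun_sum : ∀ u : Fin n, ∑ r, eun n u r = 1 := by
    intro u
    simp [eun]
  have hrowadm : adm n l m L bmr bjr := by
    refine ⟨hL0, ?_, hLsum, ?_, ?_⟩
    · intro r
      by_cases h1 : r = s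
      · rw [h1, hbmrs]; have := hM0 s; omega
      by_cases h2 : r = t
      · rw [h2, hbmrt]; have := hJt.2.2; omega
      · rw [hbmro r h1 h2]; exact hM0 r
    · rw [hbmr]
      simp only [Pi.sub_apply, Pi.add_apply]
      rw [Finset.sum_sub_distrib, Finset.sum_add_distrib, heun_sum, heun_sum, hMsum]
      ring
    · intro r
      by_cases h2 : r = t
      · rw [h2, hbjrt, hbmrt, le_min_iff]
        have h3 := hJt.1
        have h4 := hJt.2
        exact ⟨by omega, by omega, by omega⟩
      by_cases h1 : r = s
      · rw [h1, hbjrs, hbmrs, le_min_iff]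
        have h4 := hJs.2
        exact ⟨hJs.1, by omega, by omega⟩
      · rw [hbjro r h2, hbmro r h1 h2]
        exact hJ r
  have hrowsum : (∑ r, bjr r) = (j : ℤ) := by
    rw [hbjr]
    simp only [Pi.sub_apply]
    rw [Finset.sum_sub_distrib, heun_sum, hsum]
    ring
  have h0 := congrFun hll
    ((s, ⟨(L, bmr, bjr), hrowadm, hrowsum⟩) :
      Fin n × {d : (Fin n → ℤ) × (Fin n → ℤ) × (Fin n → ℤ) //
        adm n l m d.1 d.2.1 d.2.2 ∧ (∑ t, d.2.2 t) = (j : ℤ)})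
  rw [Finsupp.linearCombination_apply] at h0
  simp only [Finsupp.sum, Finset.sum_apply, Pi.smul_apply, smul_eq_mul,
    Pi.zero_apply] at h0
  try dsimp only at h0
  have hCdiag : Centry n s L bmr bjr L M J
      = sA2 (L s) (L t) (M s + 1) (M t - 1) (J s) (J t - 1) := by
    simp only [Centry]
    rw [hs1]
    rw [if_neg, if_pos]
    · simp only [cA2]
      rw [hs1, hbmrs, hbmrt, hbjrs, hbjrt]
    · exact ⟨trivial, by rw [hbmr]; ring, by rw [hbjr]; ring⟩
    · rintro ⟨h1, -, -⟩
      have h2 := congrFun h1 s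
      simp [eun, hst] at h2
      omega
  have hdspec := entry_spec 0 (L t - (J t - 1)) ((M s + 1) - J s)
      (L s + (M s + 1) - J s + 1) (L s + (M s + 1) - 2 * J s + 1)
      (L t + (M t - 1) - 2 * (J t - 1) + 1)
      (by have := hJt.2.1; omega) (by have := hJs.2.2; omega)
      (by have h1 := hJs.2.1; have h2 := hJs.2.2; omega)
      (by have h1 := hJs.2.1; have h2 := hJs.2.2; omega)
      (by have h1 := hJt.2.1; have h2 := hJt.2.2; omega)
  have hdval : sA2 (L s) (L t) (M s + 1) (M t - 1) (J s) (J t - 1) ≠ 0 ∧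
      (sA2 (L s) (L t) (M s + 1) (M t - 1) (J s) (J t - 1)).intDegree
        = M s - M t + J t - 1 := by
    rw [sA2_shape]
    constructor
    · exact neg_ne_zero.mpr hdspec.1
    · rw [RatFunc.intDegree_neg, hdspec.2]; ring
  have hllcm : ll ⟨(L, M, J), hpair⟩ ≠ 0 := Finsupp.mem_support_iff.mp hcm
  refine sum_dominant ll.support
    (fun c => ll c * Centry n s L bmr bjr c.1.1 c.1.2.1 c.1.2.2)
    ⟨(L, M, J), hpair⟩ hcm ?_ ?_ h0
  · dsimp only
    rw [hCdiag]
    exact mul_ne_zero hllcm hdval.1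
  · intro c' hc' hne'
    obtain ⟨⟨L', M', J'⟩, hp'⟩ := c'
    have hllc' : ll ⟨(L', M', J'), hp'⟩ ≠ 0 := Finsupp.mem_support_iff.mp hc'
    have hmax' := hmax _ hc'
    dsimp only at hmax' ⊢
    have hDdiag : (ll ⟨(L, M, J), hpair⟩ *
        Centry n s L bmr bjr L M J).intDegree
        = (ll ⟨(L, M, J), hpair⟩).intDegree + (M s - M t + J t - 1) := by
      rw [hCdiag, RatFunc.intDegree_mul hllcm hdval.1, hdval.2]
    rw [hDdiag]
    simp only [Centry]
    rw [hs1]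
    rcases Classical.em (L' = L - eun n s + eun n t ∧ M' = bmr ∧ J' = bjr + eun n t)
        with h1 | h1
    · rw [if_pos h1]
      obtain ⟨e1, e2, e3⟩ := h1
      simp only [cA1]
      rw [hs1, hbmrs, hbmrt, hbjrs, hbjrt]
      by_cases hz : L s - J s = 0 ∨ (M t - 1) - (J t - 1) = 0
      · left; rw [sA1_zero hz, mul_zero]
      · right
        push_neg at hz
        have hx : 1 ≤ L s - J s := by have := hJs.2.1; omega
        have hy : 1 ≤ (M t - 1) - (J t - 1) := by have := hJt.2.2; omega
        have hspec := entry_spec (J s + (J t - 1) - L t - (M s + 1) - 1)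
          (L s - J s) ((M t - 1) - (J t - 1)) (L s + (M s + 1) - J s + 1)
          (L s + (M s + 1) - 2 * J s + 1) (L t + (M t - 1) - 2 * (J t - 1) + 1)
          hx hy (by have ha := hJs.2.1; have hb := hJs.2.2; omega)
          (by have ha := hJs.2.1; have hb := hJs.2.2; omega)
          (by have ha := hJt.2.1; have hb := hJt.2.2; omega)
        rw [sA1]
        refine ⟨mul_ne_zero hllc' hspec.1, ?_⟩
        rw [RatFunc.intDegree_mul hllc' hspec.1, hspec.2]
        have hJ'eq : J' = J := by rw [e3, hbjr]; ring
        have hL's : L' s = L s - 1 := by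
          rw [e1]; simp [eun, hst]; try omega
        have hL't : L' t = L t + 1 := by
          rw [e1]; simp [eun, hts]; try omega
        have hL'o : ∀ r, r ≠ s → r ≠ t → L' r = L r := by
          intro r hr1 hr2; rw [e1]; simp [eun, hr1, hr2]
        have hpot : pot ⟨(L', M', J'), hp'⟩ = pot ⟨(L, M, J), hpair⟩
            + (psiZ (L s - 1) (M s + 1) (J s) - psiZ (L s) (M s) (J s))
            + (psiZ (L t + 1) (M t - 1) (J t) - psiZ (L t) (M t) (J t)) := by
          simp only [hpotdef]
          have hkey := sum_offdiag (n := n)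
            (fun r => psiZ (L' r) (M' r) (J' r)) (fun r => psiZ (L r) (M r) (J r)) hst
            (by intro r hr1 hr2
                show psiZ (L' r) (M' r) (J' r) = psiZ (L r) (M r) (J r)
                rw [hL'o r hr1 hr2, hJ'eq, e2, hbmro r hr1 hr2])
          try dsimp only
          rw [hkey]
          try dsimp only
          rw [hL's, hL't, hJ'eq, e2, hbmrs, hbmrt]
          try ring
        have hd1 : psiZ (L s - 1) (M s + 1) (J s) - psiZ (L s) (M s) (J s)
            = M s - L s + 1 := by simp only [psiZ]; ring
        have hd2 : psiZ (L t + 1) (M t - 1) (J t) - psiZ (L t) (M t) (J t)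
            = L t - M t + 1 := by simp only [psiZ]; ring
        rw [hd1, hd2] at hpot
        have h5 := hJs.2.1
        have h6 := hJs.2.2
        have h7 := hJt.2.1
        have h8 := hJt.2.2
        omega
    rw [if_neg h1]
    rcases Classical.em (L' = L ∧ M' = bmr - eun n s + eun n t ∧ J' = bjr + eun n t)
        with h2 | h2
    · rw [if_pos h2]
      exfalso
      obtain ⟨e1, e2, e3⟩ := h2
      have hM' : M' = M := by rw [e2, hbmr]; ring
      have hJ' : J' = J := by rw [e3, hbjr]; ring
      subst e1; subst hM'; subst hJ'
      exact hne' (Subtype.ext rfl)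
    rw [if_neg h2]
    rcases Classical.em (L' = L + eun n s - eun n t ∧ M' = bmr ∧ J' = bjr + eun n s)
        with h3 | h3
    · rw [if_pos h3]
      obtain ⟨e1, e2, e3⟩ := h3
      simp only [cA3]
      rw [hs1, hbmrs, hbmrt, hbjrs, hbjrt]
      right
      have hspec := entry_spec (J s + (J t - 1) - L s - (M s + 1) - 1)
        (L t - (J t - 1)) ((M s + 1) - J s) (L t + (M t - 1) - (J t - 1) + 1)
        (L s + (M s + 1) - 2 * J s + 1) (L t + (M t - 1) - 2 * (J t - 1) + 1)
        (by have := hJt.2.1; omega) (by have := hJs.2.2; omega)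
        (by have ha := hJt.2.1; have hb := hJt.2.2; omega)
        (by have ha := hJs.2.1; have hb := hJs.2.2; omega)
        (by have ha := hJt.2.1; have hb := hJt.2.2; omega)
      rw [sA3]
      refine ⟨mul_ne_zero hllc' hspec.1, ?_⟩
      rw [RatFunc.intDegree_mul hllc' hspec.1, hspec.2]
      have hL's : L' s = L s + 1 := by rw [e1]; simp [eun, hst]; try omega
      have hL't : L' t = L t - 1 := by rw [e1]; simp [eun, hts]; try omega
      have hL'o : ∀ r, r ≠ s → r ≠ t → L' r = L r := by
        intro r hr1 hr2; rw [e1]; simp [eun, hr1, hr2]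
      have hJ's : J' s = J s + 1 := by rw [e3]; simp [eun, hst, hbjrs]; try omega
      have hJ't : J' t = J t - 1 := by rw [e3]; simp [eun, hts, hbjrt]; try omega
      have hJ'o : ∀ r, r ≠ s → r ≠ t → J' r = J r := by
        intro r hr1 hr2
        rw [e3]
        simp [eun, hr1, hbjro r hr2]
      have hpot : pot ⟨(L', M', J'), hp'⟩ = pot ⟨(L, M, J), hpair⟩
          + (psiZ (L s + 1) (M s + 1) (J s + 1) - psiZ (L s) (M s) (J s))
          + (psiZ (L t - 1) (M t - 1) (J t - 1) - psiZ (L t) (M t) (J t)) := by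
        simp only [hpotdef]
        have hkey := sum_offdiag (n := n)
          (fun r => psiZ (L' r) (M' r) (J' r)) (fun r => psiZ (L r) (M r) (J r)) hst
          (by intro r hr1 hr2
              show psiZ (L' r) (M' r) (J' r) = psiZ (L r) (M r) (J r)
              rw [hL'o r hr1 hr2, hJ'o r hr1 hr2, e2, hbmro r hr1 hr2])
        try dsimp only
        rw [hkey]
        try dsimp only
        rw [hL's, hL't, hJ's, hJ't, e2, hbmrs, hbmrt]
        try ring
      have hd1 : psiZ (L s + 1) (M s + 1) (J s + 1) - psiZ (L s) (M s) (J s)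
          = L s + M s + 1 := by simp only [psiZ]; ring
      have hd2 : psiZ (L t - 1) (M t - 1) (J t - 1) - psiZ (L t) (M t) (J t)
          = -(L t + M t - 1) := by simp only [psiZ]; ring
      rw [hd1, hd2] at hpot
      have h5 := hJs.2.1
      have h6 := hJs.2.2
      have h7 := hJt.2.1
      have h8 := hJt.2.2
      omega
    rw [if_neg h3]
    rcases Classical.em (L' = L ∧ M' = bmr + eun n s - eun n t ∧ J' = bjr + eun n s)
        with h4 | h4
    · rw [if_pos h4]
      obtain ⟨e1, e2, e3⟩ := h4
      simp only [cA4]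
      rw [hs1, hbmrs, hbmrt, hbjrs, hbjrt]
      by_cases hz : L s - J s = 0 ∨ (M t - 1) - (J t - 1) = 0
      · left; rw [sA4_zero hz, mul_zero]
      · right
        push_neg at hz
        have hx : 1 ≤ L s - J s := by have := hJs.2.1; omega
        have hy : 1 ≤ (M t - 1) - (J t - 1) := by have := hJt.2.2; omega
        have hspec := entry_spec
          (2 * J s + 2 * (J t - 1) - L s - L t - 2 * (M s + 1) - 2)
          (L s - J s) ((M t - 1) - (J t - 1)) (L t + (M t - 1) - (J t - 1) + 1)
          (L s + (M s + 1) - 2 * J s + 1) (L t + (M t - 1) - 2 * (J t - 1) + 1)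
          hx hy (by have ha := hJt.2.1; have hb := hJt.2.2; omega)
          (by have ha := hJs.2.1; have hb := hJs.2.2; omega)
          (by have ha := hJt.2.1; have hb := hJt.2.2; omega)
        rw [sA4_shape]
        refine ⟨mul_ne_zero hllc' (neg_ne_zero.mpr hspec.1), ?_⟩
        rw [mul_comm (ll _), RatFunc.intDegree_mul (neg_ne_zero.mpr hspec.1) hllc',
          RatFunc.intDegree_neg, hspec.2]
        have hM's : M' s = M s + 2 := by
          rw [e2, hbmr]; simp [eun, hst]; try omega
        have hM't : M' t = M t - 2 := by
          rw [e2, hbmr]; simp [eun, hts]; try omega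
        have hM'o : ∀ r, r ≠ s → r ≠ t → M' r = M r := by
          intro r hr1 hr2
          rw [e2]
          simp [eun, hr1, hr2, hbmro r hr1 hr2]
        have hJ's : J' s = J s + 1 := by rw [e3]; simp [eun, hst, hbjrs]; try omega
        have hJ't : J' t = J t - 1 := by rw [e3]; simp [eun, hts, hbjrt]; try omega
        have hJ'o : ∀ r, r ≠ s → r ≠ t → J' r = J r := by
          intro r hr1 hr2
          rw [e3]
          simp [eun, hr1, hbjro r hr2]
        have hpot : pot ⟨(L', M', J'), hp'⟩ = pot ⟨(L, M, J), hpair⟩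
            + (psiZ (L s) (M s + 2) (J s + 1) - psiZ (L s) (M s) (J s))
            + (psiZ (L t) (M t - 2) (J t - 1) - psiZ (L t) (M t) (J t)) := by
          simp only [hpotdef]
          have hkey := sum_offdiag (n := n)
            (fun r => psiZ (L' r) (M' r) (J' r)) (fun r => psiZ (L r) (M r) (J r)) hst
            (by intro r hr1 hr2
                show psiZ (L' r) (M' r) (J' r) = psiZ (L r) (M r) (J r)
                rw [e1, hM'o r hr1 hr2, hJ'o r hr1 hr2])
          try dsimp only
          rw [hkey]
          try dsimp only
          rw [hM's, hM't, hJ's, hJ't, e1]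
          try ring
        have hd1 : psiZ (L s) (M s + 2) (J s + 1) - psiZ (L s) (M s) (J s)
            = 2 * M s + 2 := by simp only [psiZ]; ring
        have hd2 : psiZ (L t) (M t - 2) (J t - 1) - psiZ (L t) (M t) (J t)
            = -(2 * M t - 2) := by simp only [psiZ]; ring
        rw [hd1, hd2] at hpot
        have h5 := hJs.2.1
        have h6 := hJs.2.2
        have h7 := hJt.2.1
        have h8 := hJt.2.2
        omega
    rw [if_neg h4]
    left; exact mul_zero _

end AII
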